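/- arXiv:2005.02484 — 2 statements merged into one kernel-verified Lean document; each statement's English description precedes it below -/
import Mathlib

section
/- Let (X,T) be a TDS and x ∈ X. If y is an FK-continuity point lying in the closure of the orbit {T^n x : n ≥ 0} of x, then x is an FK-continuity point and ρ_FK(x,y) = 0. -/
open Filter Topology MeasureTheory Set

namespace FKPaper

variable {X : Type*} [MetricSpace X]

/-- The maximal fit of an `(n,δ)`-match between the orbits of `x` and `z` under `T`:
the largest cardinality of the domain of an order-preserving bijection
`π : D → R`, with `D, R ⊆ {0,…,n-1}` and `dist (T^[i] x) (T^[π i] z) < δ` for `i ∈ D`. -/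
noncomputable def maxFit (T : X → X) (δ : ℝ) (n : ℕ) (x z : X) : ℕ :=
  sSup {k : ℕ | ∃ i j : Fin k → ℕ, StrictMono i ∧ StrictMono j ∧
    (∀ s, i s < n) ∧ (∀ s, j s < n) ∧ ∀ s, dist (T^[i s] x) (T^[j s] z) < δ}

/-- `f̄_{n,δ}(x,z) = 1 - (maximal fit of an (n,δ)-match of x and z)/n`. -/
noncomputable def fbarN (T : X → X) (δ : ℝ) (n : ℕ) (x z : X) : ℝ :=
  1 - (maxFit T δ n x z : ℝ) / n

/-- `f̄_δ(x,z) = limsup_{n→∞} f̄_{n,δ}(x,z)`. -/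
noncomputable def fbar (T : X → X) (δ : ℝ) (x z : X) : ℝ :=
  Filter.limsup (fun n => fbarN T δ n x z) Filter.atTop

/-- The Feldman–Katok pseudometric `ρ_FK(x,z) = inf {δ > 0 : f̄_δ(x,z) < δ}`. -/
noncomputable def rhoFK (T : X → X) (x z : X) : ℝ :=
  sInf {δ : ℝ | 0 < δ ∧ fbar T δ x z < δ}

/-- `x` is an FK-continuity point for `(X,T)`. -/
def FKContinuityPoint (T : X → X) (x : X) : Prop :=
  ∀ ε > 0, ∃ δ > 0, ∀ y : X, dist x y ≤ δ → rhoFK T x y ≤ ε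

/-- The set of FK-continuity points. -/
def EqFK (T : X → X) : Set X := {x : X | FKContinuityPoint T x}

end FKPaper

open FKPaper Filter Topology MeasureTheory Set

namespace FKAux

variable {X : Type*} [MetricSpace X]

lemma real_le_of_forall_pos_le_add {a b : ℝ} (h : ∀ ε > (0:ℝ), a ≤ b + ε) : a ≤ b := by
  by_contra hc
  push_neg at hc
  have := h ((a - b) / 2) (by linarith)
  linarith

def MSet (T : X → X) (δ : ℝ) (n : ℕ) (x z : X) : Set ℕ :=
  {k : ℕ | ∃ i j : Fin k → ℕ, StrictMono i ∧ StrictMono j ∧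
    (∀ s, i s < n) ∧ (∀ s, j s < n) ∧ ∀ s, dist (T^[i s] x) (T^[j s] z) < δ}

lemma maxFit_eq (T : X → X) (δ : ℝ) (n : ℕ) (x z : X) :
    maxFit T δ n x z = sSup (MSet T δ n x z) := rfl

lemma zero_mem_MSet (T : X → X) (δ : ℝ) (n : ℕ) (x z : X) : 0 ∈ MSet T δ n x z :=
  ⟨fun s => s.elim0, fun s => s.elim0, fun s => s.elim0, fun s => s.elim0,
    fun s => s.elim0, fun s => s.elim0, fun s => s.elim0⟩

lemma MSet_le_n {T : X → X} {δ : ℝ} {n k : ℕ} {x z : X} (hk : k ∈ MSet T δ n x z) : k ≤ n := by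
  obtain ⟨i, j, hi, hj, hin, hjn, -⟩ := hk
  classical
  have h1 : (Finset.univ.image i).card = k := by
    rw [Finset.card_image_of_injective _ hi.injective, Finset.card_univ, Fintype.card_fin]
  have h2 : (Finset.univ.image i) ⊆ Finset.range n := by
    intro a ha
    obtain ⟨s, -, rfl⟩ := Finset.mem_image.1 ha
    exact Finset.mem_range.2 (hin s)
  calc k = (Finset.univ.image i).card := h1.symm
    _ ≤ (Finset.range n).card := Finset.card_le_card h2
    _ = n := Finset.card_range n

lemma MSet_bddAbove (T : X → X) (δ : ℝ) (n : ℕ) (x z : X) : BddAbove (MSet T δ n x z) :=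
  ⟨n, fun _ hk => MSet_le_n hk⟩

lemma le_maxFit {T : X → X} {δ : ℝ} {n k : ℕ} {x z : X} (hk : k ∈ MSet T δ n x z) :
    k ≤ maxFit T δ n x z :=
  le_csSup (MSet_bddAbove T δ n x z) hk

lemma maxFit_le_n (T : X → X) (δ : ℝ) (n : ℕ) (x z : X) : maxFit T δ n x z ≤ n :=
  csSup_le ⟨0, zero_mem_MSet T δ n x z⟩ fun _ hk => MSet_le_n hk

lemma maxFit_mem (T : X → X) (δ : ℝ) (n : ℕ) (x z : X) :
    maxFit T δ n x z ∈ MSet T δ n x z :=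
  Nat.sSup_mem ⟨0, zero_mem_MSet T δ n x z⟩ (MSet_bddAbove T δ n x z)

lemma MSet_symm (T : X → X) (δ : ℝ) (n : ℕ) (x z : X) :
    MSet T δ n x z = MSet T δ n z x := by
  ext k
  constructor <;> rintro ⟨i, j, hi, hj, hin, hjn, hd⟩ <;>
    exact ⟨j, i, hj, hi, hjn, hin, fun s => by rw [dist_comm]; exact hd s⟩

lemma maxFit_symm (T : X → X) (δ : ℝ) (n : ℕ) (x z : X) :
    maxFit T δ n x z = maxFit T δ n z x := by
  rw [maxFit_eq, maxFit_eq, MSet_symm]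

lemma fbarN_symm (T : X → X) (δ : ℝ) (n : ℕ) (x z : X) :
    fbarN T δ n x z = fbarN T δ n z x := by
  rw [fbarN, fbarN, maxFit_symm]

lemma fbar_symm (T : X → X) (δ : ℝ) (x z : X) : fbar T δ x z = fbar T δ z x := by
  unfold fbar; simp only [fbarN_symm]

lemma rhoFK_symm (T : X → X) (x z : X) : rhoFK T x z = rhoFK T z x := by
  unfold rhoFK; simp only [fbar_symm]

lemma fbarN_nonneg (T : X → X) (δ : ℝ) (n : ℕ) (x z : X) : 0 ≤ fbarN T δ n x z := by
  rw [fbarN, sub_nonneg]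
  rcases Nat.eq_zero_or_pos n with rfl | hn
  · simp
  · rw [div_le_one (by exact_mod_cast hn)]
    exact_mod_cast maxFit_le_n T δ n x z

lemma fbarN_le_one (T : X → X) (δ : ℝ) (n : ℕ) (x z : X) : fbarN T δ n x z ≤ 1 := by
  rw [fbarN]
  have : (0:ℝ) ≤ (maxFit T δ n x z : ℝ) / n := by positivity
  linarith

lemma isBounded_le_fbarN (T : X → X) (δ : ℝ) (x z : X) :
    IsBoundedUnder (· ≤ ·) atTop (fun n => fbarN T δ n x z) :=
  ⟨1, Filter.eventually_map.2 (Eventually.of_forall fun n => fbarN_le_one T δ n x z)⟩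

lemma isBounded_ge_fbarN (T : X → X) (δ : ℝ) (x z : X) :
    IsBoundedUnder (· ≥ ·) atTop (fun n => fbarN T δ n x z) :=
  ⟨0, Filter.eventually_map.2 (Eventually.of_forall fun n => fbarN_nonneg T δ n x z)⟩

lemma isCobounded_le_fbarN (T : X → X) (δ : ℝ) (x z : X) :
    IsCoboundedUnder (· ≤ ·) atTop (fun n => fbarN T δ n x z) :=
  (isBounded_ge_fbarN T δ x z).isCoboundedUnder_le

lemma fbar_le_one (T : X → X) (δ : ℝ) (x z : X) : fbar T δ x z ≤ 1 :=
  limsup_le_of_le (isCobounded_le_fbarN T δ x z)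
    (Eventually.of_forall fun n => fbarN_le_one T δ n x z)

/-- Composition of matches: the key combinatorial lemma. -/
lemma MSet_comp {T : X → X} {δ1 δ2 : ℝ} {n k1 k2 : ℕ} {x w z : X}
    (h1 : k1 ∈ MSet T δ1 n x w) (h2 : k2 ∈ MSet T δ2 n w z) :
    k1 + k2 ≤ maxFit T (δ1 + δ2) n x z + n := by
  classical
  obtain ⟨i1, j1, hi1, hj1, hin1, hjn1, hd1⟩ := h1
  obtain ⟨i2, j2, hi2, hj2, hin2, hjn2, hd2⟩ := h2
  set A : Finset ℕ := Finset.univ.image j1 with hA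
  set B : Finset ℕ := Finset.univ.image i2 with hB
  have hAcard : A.card = k1 := by
    rw [hA, Finset.card_image_of_injective _ hj1.injective, Finset.card_univ, Fintype.card_fin]
  have hBcard : B.card = k2 := by
    rw [hB, Finset.card_image_of_injective _ hi2.injective, Finset.card_univ, Fintype.card_fin]
  set C : Finset ℕ := A ∩ B with hC
  set m : ℕ := C.card with hm
  have hsub : A ∪ B ⊆ Finset.range n := by
    intro a ha
    rcases Finset.mem_union.1 ha with h | h
    · obtain ⟨s, -, rfl⟩ := Finset.mem_image.1 h
      exact Finset.mem_range.2 (hjn1 s)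
    · obtain ⟨s, -, rfl⟩ := Finset.mem_image.1 h
      exact Finset.mem_range.2 (hin2 s)
  have hcard : k1 + k2 ≤ m + n := by
    have hu : (A ∪ B).card + C.card = A.card + B.card := by
      rw [hC]; exact Finset.card_union_add_card_inter A B
    have hle : (A ∪ B).card ≤ n := by
      simpa using Finset.card_le_card hsub
    rw [hAcard, hBcard] at hu
    omega
  -- build the composed match of size m
  set e : Fin m ≃o {v // v ∈ C} := C.orderIsoOfFin rfl with he
  have hmemA : ∀ t : Fin m, ((e t : ℕ)) ∈ A := fun t => (Finset.mem_inter.1 (e t).2).1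
  have hmemB : ∀ t : Fin m, ((e t : ℕ)) ∈ B := fun t => (Finset.mem_inter.1 (e t).2).2
  have hex1 : ∀ t : Fin m, ∃ s : Fin k1, j1 s = (e t : ℕ) := by
    intro t
    obtain ⟨s, -, hs⟩ := Finset.mem_image.1 (hmemA t)
    exact ⟨s, hs⟩
  have hex2 : ∀ t : Fin m, ∃ s : Fin k2, i2 s = (e t : ℕ) := by
    intro t
    obtain ⟨s, -, hs⟩ := Finset.mem_image.1 (hmemB t)
    exact ⟨s, hs⟩
  set s1 : Fin m → Fin k1 := fun t => (hex1 t).choose with hs1def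
  have hs1 : ∀ t, j1 (s1 t) = (e t : ℕ) := fun t => (hex1 t).choose_spec
  set s2 : Fin m → Fin k2 := fun t => (hex2 t).choose with hs2def
  have hs2 : ∀ t, i2 (s2 t) = (e t : ℕ) := fun t => (hex2 t).choose_spec
  have hemono : StrictMono (fun t : Fin m => ((e t : ℕ))) := fun a b hab => by
    exact_mod_cast e.strictMono hab
  have hs1mono : StrictMono s1 := by
    intro a b hab
    have h : j1 (s1 a) < j1 (s1 b) := by
      rw [hs1 a, hs1 b]; exact_mod_cast e.strictMono hab
    exact hj1.lt_iff_lt.1 h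
  have hs2mono : StrictMono s2 := by
    intro a b hab
    have h : i2 (s2 a) < i2 (s2 b) := by
      rw [hs2 a, hs2 b]; exact_mod_cast e.strictMono hab
    exact hi2.lt_iff_lt.1 h
  have hmmem : m ∈ MSet T (δ1 + δ2) n x z := by
    refine ⟨fun t => i1 (s1 t), fun t => j2 (s2 t), hi1.comp hs1mono, hj2.comp hs2mono,
      fun t => hin1 _, fun t => hjn2 _, fun t => ?_⟩
    have hda : dist (T^[i1 (s1 t)] x) (T^[(e t : ℕ)] w) < δ1 := by
      rw [← hs1 t]; exact hd1 (s1 t)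
    have hdb : dist (T^[(e t : ℕ)] w) (T^[j2 (s2 t)] z) < δ2 := by
      rw [← hs2 t]; exact hd2 (s2 t)
    calc dist (T^[i1 (s1 t)] x) (T^[j2 (s2 t)] z)
        ≤ dist (T^[i1 (s1 t)] x) (T^[(e t : ℕ)] w) + dist (T^[(e t : ℕ)] w) (T^[j2 (s2 t)] z) :=
          dist_triangle _ _ _
      _ < δ1 + δ2 := add_lt_add hda hdb
  have := le_maxFit hmmem
  omega

lemma fbarN_triangle (T : X → X) (δ1 δ2 : ℝ) {n : ℕ} (hn : 1 ≤ n) (x w z : X) :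
    fbarN T (δ1 + δ2) n x z ≤ fbarN T δ1 n x w + fbarN T δ2 n w z := by
  have key : (maxFit T δ1 n x w : ℝ) + (maxFit T δ2 n w z : ℝ)
      ≤ (maxFit T (δ1 + δ2) n x z : ℝ) + n := by
    exact_mod_cast MSet_comp (maxFit_mem T δ1 n x w) (maxFit_mem T δ2 n w z)
  have hnpos : (0:ℝ) < n := by exact_mod_cast hn
  have h2 := (div_le_div_iff_of_pos_right hnpos).2 key
  rw [add_div, add_div, div_self hnpos.ne'] at h2
  unfold fbarN
  linarith

lemma fbar_triangle (T : X → X) (δ1 δ2 : ℝ) (x w z : X) :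
    fbar T (δ1 + δ2) x z ≤ fbar T δ1 x w + fbar T δ2 w z := by
  have h1 : fbar T (δ1 + δ2) x z ≤
      limsup ((fun n => fbarN T δ1 n x w) + (fun n => fbarN T δ2 n w z)) atTop := by
    apply limsup_le_limsup
    · filter_upwards [eventually_ge_atTop 1] with n hn
      exact fbarN_triangle T δ1 δ2 hn x w z
    · exact isCobounded_le_fbarN T (δ1 + δ2) x z
    · exact ⟨2, Filter.eventually_map.2 (Eventually.of_forall fun n => by
        have h1 := fbarN_le_one T δ1 n x w
        have h2 := fbarN_le_one T δ2 n w z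
        simp only [Pi.add_apply]; linarith)⟩
  refine h1.trans (limsup_add_le (isBounded_ge_fbarN T δ1 x w) (isBounded_le_fbarN T δ1 x w)
    (isCobounded_le_fbarN T δ2 w z) (isBounded_le_fbarN T δ2 w z))

lemma rhoFK_nonneg (T : X → X) (x z : X) : 0 ≤ rhoFK T x z :=
  Real.sInf_nonneg fun _ hδ => hδ.1.le

lemma rhoFK_set_nonempty (T : X → X) (x z : X) :
    {δ : ℝ | 0 < δ ∧ fbar T δ x z < δ}.Nonempty :=
  ⟨2, by norm_num, lt_of_le_of_lt (fbar_le_one T 2 x z) (by norm_num)⟩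

lemma rhoFK_le {T : X → X} {x z : X} {δ : ℝ} (h1 : 0 < δ) (h2 : fbar T δ x z < δ) :
    rhoFK T x z ≤ δ :=
  csInf_le ⟨0, fun _ ha => ha.1.le⟩ ⟨h1, h2⟩

lemma rhoFK_triangle (T : X → X) (x w z : X) :
    rhoFK T x z ≤ rhoFK T x w + rhoFK T w z := by
  refine real_le_of_forall_pos_le_add fun η hη => ?_
  obtain ⟨δ1, hδ1, hlt1⟩ := Real.lt_sInf_add_pos (rhoFK_set_nonempty T x w) (half_pos hη)
  obtain ⟨δ2, hδ2, hlt2⟩ := Real.lt_sInf_add_pos (rhoFK_set_nonempty T w z) (half_pos hη)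
  have hmem : fbar T (δ1 + δ2) x z < δ1 + δ2 :=
    lt_of_le_of_lt (fbar_triangle T δ1 δ2 x w z) (add_lt_add hδ1.2 hδ2.2)
  have hle := rhoFK_le (add_pos hδ1.1 hδ2.1) hmem
  have e1 : sInf {δ : ℝ | 0 < δ ∧ fbar T δ x w < δ} = rhoFK T x w := rfl
  have e2 : sInf {δ : ℝ | 0 < δ ∧ fbar T δ w z < δ} = rhoFK T w z := rfl
  rw [e1] at hlt1
  rw [e2] at hlt2
  linarith

lemma rhoFK_iterate (T : X → X) (x : X) (k : ℕ) : rhoFK T x (T^[k] x) = 0 := by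
  have hfbar : ∀ δ : ℝ, 0 < δ → fbar T δ x (T^[k] x) ≤ 0 := by
    intro δ hδ
    have hev : ∀ᶠ n in atTop, fbarN T δ n x (T^[k] x) ≤ (k : ℝ) / n := by
      filter_upwards [eventually_ge_atTop (k + 1)] with n hn
      have hmem : n - k ∈ MSet T δ n x (T^[k] x) := by
        refine ⟨fun t => k + (t : ℕ), fun t => (t : ℕ), ?_, ?_, ?_, ?_, ?_⟩
        · intro a b hab
          show k + (a : ℕ) < k + (b : ℕ)
          have := Fin.lt_iff_val_lt_val.mp hab; omega
        · intro a b hab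
          show (a : ℕ) < (b : ℕ)
          exact Fin.lt_iff_val_lt_val.mp hab
        · intro t
          show k + (t : ℕ) < n
          have := t.isLt; omega
        · intro t
          show (t : ℕ) < n
          have := t.isLt; omega
        · intro t
          show dist (T^[k + (t : ℕ)] x) (T^[(t : ℕ)] (T^[k] x)) < δ
          have hiter : T^[(t : ℕ)] (T^[k] x) = T^[k + (t : ℕ)] x := by
            rw [← Function.iterate_add_apply, Nat.add_comm]
          rw [hiter, dist_self]
          exact hδ
      have hfit : n - k ≤ maxFit T δ n x (T^[k] x) := le_maxFit hmem
      have hknn : k ≤ n := by omega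
      have hnpos : (0:ℝ) < n := by
        have : 0 < n := by omega
        exact_mod_cast this
      have hF : ((n - k : ℕ) : ℝ) ≤ (maxFit T δ n x (T^[k] x) : ℝ) := Nat.cast_le.2 hfit
      rw [Nat.cast_sub hknn] at hF
      have hdiv := (div_le_div_iff_of_pos_right hnpos).2 hF
      rw [sub_div, div_self hnpos.ne'] at hdiv
      rw [fbarN]
      linarith
    have h0 : Tendsto (fun n : ℕ => (k : ℝ) / n) atTop (nhds 0) :=
      tendsto_const_div_atTop_nhds_zero_nat (k : ℝ)
    calc fbar T δ x (T^[k] x)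
        ≤ limsup (fun n : ℕ => (k : ℝ) / n) atTop :=
          limsup_le_limsup hev (isCobounded_le_fbarN T δ x _) h0.isBoundedUnder_le
      _ = 0 := h0.limsup_eq
  refine le_antisymm ?_ (rhoFK_nonneg T x _)
  have h : ∀ ε > (0:ℝ), rhoFK T x (T^[k] x) ≤ 0 + ε := by
    intro ε hε
    rw [zero_add]
    exact rhoFK_le hε (lt_of_le_of_lt (hfbar ε hε) hε)
  exact real_le_of_forall_pos_le_add h

end FKAux

open FKAux

/-- an FK-continuity point in the orbit closure of `x` makes `x`
an FK-continuity point, at `ρ_FK`-distance zero. -/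
theorem fkContinuityPoint_of_mem_orbit_closure {X : Type*} [MetricSpace X] [CompactSpace X] [Nonempty X]
    (T : X → X) (hT : Continuous T) (x y : X)
    (hy : FKContinuityPoint T y)
    (hyx : y ∈ closure {z : X | ∃ n : ℕ, T^[n] x = z}) :
    FKContinuityPoint T x ∧ rhoFK T x y = 0 := by
  constructor
  · -- FK-continuity of x
    intro ε hε
    obtain ⟨δ, hδ, hδy⟩ := hy (ε / 2) (half_pos hε)
    -- find an orbit point close to y
    obtain ⟨w, hw, hwd⟩ := Metric.mem_closure_iff.1 hyx (δ / 2) (half_pos hδ)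
    obtain ⟨n, rfl⟩ := hw
    -- uniform continuity of T^[n]
    have hUC : UniformContinuous (T^[n]) :=
      CompactSpace.uniformContinuous_of_continuous (hT.iterate n)
    obtain ⟨δ', hδ', hδ'c⟩ := Metric.uniformContinuous_iff.1 hUC (δ / 2) (half_pos hδ)
    refine ⟨δ' / 2, half_pos hδ', fun z hz => ?_⟩
    have h1 : dist x z < δ' := lt_of_le_of_lt hz (by linarith)
    have h2 : dist (T^[n] x) (T^[n] z) < δ / 2 := hδ'c h1
    have h3 : dist y (T^[n] z) ≤ δ :=
      le_of_lt (lt_of_le_of_lt (dist_triangle y (T^[n] x) (T^[n] z)) (by linarith))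
    have hyz : rhoFK T y (T^[n] z) ≤ ε / 2 := hδy _ h3
    have hyn : rhoFK T y (T^[n] x) ≤ ε / 2 := hδy _ (le_of_lt (lt_of_lt_of_le hwd (by linarith)))
    calc rhoFK T x z
        ≤ rhoFK T x (T^[n] x) + rhoFK T (T^[n] x) z := rhoFK_triangle T x _ z
      _ = rhoFK T (T^[n] x) z := by rw [rhoFK_iterate, zero_add]
      _ ≤ rhoFK T (T^[n] x) y + rhoFK T y z := rhoFK_triangle T _ y z
      _ ≤ rhoFK T (T^[n] x) y + (rhoFK T y (T^[n] z) + rhoFK T (T^[n] z) z) := by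
          have := rhoFK_triangle T y (T^[n] z) z
          linarith
      _ = rhoFK T y (T^[n] x) + (rhoFK T y (T^[n] z) + rhoFK T z (T^[n] z)) := by
          rw [rhoFK_symm T (T^[n] x) y, rhoFK_symm T (T^[n] z) z]
      _ = rhoFK T y (T^[n] x) + rhoFK T y (T^[n] z) := by rw [rhoFK_iterate, add_zero]
      _ ≤ ε / 2 + ε / 2 := add_le_add hyn hyz
      _ = ε := add_halves ε
  · -- rhoFK x y = 0
    refine le_antisymm ?_ (rhoFK_nonneg T x y)
    refine real_le_of_forall_pos_le_add fun ε hε => ?_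
    obtain ⟨δ, hδ, hδy⟩ := hy ε hε
    obtain ⟨w, hw, hwd⟩ := Metric.mem_closure_iff.1 hyx δ hδ
    obtain ⟨n, rfl⟩ := hw
    have hyn : rhoFK T y (T^[n] x) ≤ ε := hδy _ hwd.le
    have := rhoFK_triangle T x (T^[n] x) y
    rw [rhoFK_iterate, zero_add, rhoFK_symm T (T^[n] x) y] at this
    linarith
end

section
/- Let (X,T) be a TDS and μ a T-invariant ergodic Borel probability measure on X. Then (X,T) is μ-FK-continuous if and only if there exists a Borel set H ⊆ X with μ(H) = 1 such that ρ_FK(x,y) = 0 for every x,y ∈ H. -/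
open Filter Topology MeasureTheory Set

namespace FKPaper

variable {X : Type*} [MetricSpace X]

/-- `μ`-FK-continuity. -/
def MuFKContinuous [MeasurableSpace X] (T : X → X) (μ : Measure X) : Prop :=
  ∀ τ > 0, ∃ M : Set X, IsCompact M ∧ ENNReal.ofReal (1 - τ) ≤ μ M ∧
    ∀ ε > 0, ∃ δ > 0, ∀ x ∈ M, ∀ y ∈ M, dist x y ≤ δ → rhoFK T x y ≤ ε

end FKPaper

open FKPaper Filter Topology MeasureTheory Set

namespace FKPaper

variable {X : Type*} [MetricSpace X]

lemma zero_mem_matchSet (T : X → X) (δ : ℝ) (n : ℕ) (x z : X) :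
    0 ∈ {k : ℕ | ∃ i j : Fin k → ℕ, StrictMono i ∧ StrictMono j ∧
      (∀ s, i s < n) ∧ (∀ s, j s < n) ∧ ∀ s, dist (T^[i s] x) (T^[j s] z) < δ} := by
  exact ⟨fun s => s.elim0, fun s => s.elim0, fun s => s.elim0, fun s => s.elim0,
    fun s => s.elim0, fun s => s.elim0, fun s => s.elim0⟩

lemma mem_matchSet_le {T : X → X} {δ : ℝ} {n : ℕ} {x z : X} {k : ℕ}
    (h : k ∈ {k : ℕ | ∃ i j : Fin k → ℕ, StrictMono i ∧ StrictMono j ∧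
      (∀ s, i s < n) ∧ (∀ s, j s < n) ∧ ∀ s, dist (T^[i s] x) (T^[j s] z) < δ}) :
    k ≤ n := by
  obtain ⟨i, j, hi, hj, hin, hjn, hd⟩ := h
  have : Function.Injective (fun s : Fin k => (⟨i s, hin s⟩ : Fin n)) := by
    intro a b hab
    exact hi.injective (by simpa using congrArg Fin.val hab)
  simpa using Fintype.card_le_of_injective _ this

lemma matchSet_bddAbove (T : X → X) (δ : ℝ) (n : ℕ) (x z : X) :
    BddAbove {k : ℕ | ∃ i j : Fin k → ℕ, StrictMono i ∧ StrictMono j ∧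
      (∀ s, i s < n) ∧ (∀ s, j s < n) ∧ ∀ s, dist (T^[i s] x) (T^[j s] z) < δ} :=
  ⟨n, fun _ h => mem_matchSet_le h⟩

lemma maxFit_mem (T : X → X) (δ : ℝ) (n : ℕ) (x z : X) :
    maxFit T δ n x z ∈ {k : ℕ | ∃ i j : Fin k → ℕ, StrictMono i ∧ StrictMono j ∧
      (∀ s, i s < n) ∧ (∀ s, j s < n) ∧ ∀ s, dist (T^[i s] x) (T^[j s] z) < δ} :=
  Nat.sSup_mem ⟨0, zero_mem_matchSet T δ n x z⟩ (matchSet_bddAbove T δ n x z)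

lemma maxFit_le (T : X → X) (δ : ℝ) (n : ℕ) (x z : X) : maxFit T δ n x z ≤ n :=
  mem_matchSet_le (maxFit_mem T δ n x z)

lemma le_maxFit {T : X → X} {δ : ℝ} {n : ℕ} {x z : X} {k : ℕ}
    (h : k ∈ {k : ℕ | ∃ i j : Fin k → ℕ, StrictMono i ∧ StrictMono j ∧
      (∀ s, i s < n) ∧ (∀ s, j s < n) ∧ ∀ s, dist (T^[i s] x) (T^[j s] z) < δ}) :
    k ≤ maxFit T δ n x z :=
  le_csSup (matchSet_bddAbove T δ n x z) h


lemma shift_le_maxFit (T : X → X) {δ : ℝ} (hδ : 0 < δ) {n m : ℕ} (hmn : m ≤ n) (x : X) :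
    n - m ≤ maxFit T δ n x (T^[m] x) := by
  apply le_maxFit
  refine ⟨fun s => s + m, fun s => s, ?_, ?_, ?_, ?_, ?_⟩
  · intro a b hab; simpa using (by exact_mod_cast hab : (a:ℕ) < b)
  · intro a b hab; exact_mod_cast hab
  · intro s; show (s:ℕ) + m < n; have := s.isLt; omega
  · intro s; show (s:ℕ) < n; have := s.isLt; omega
  · intro s
    show dist (T^[(s:ℕ)+m] x) (T^[(s:ℕ)] (T^[m] x)) < δ
    have : T^[(s:ℕ)] (T^[m] x) = T^[(s:ℕ) + m] x := by
      rw [← Function.iterate_add_apply]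
    rw [this]; simpa using hδ

lemma shift_le_maxFit' (T : X → X) {δ : ℝ} (hδ : 0 < δ) {n m : ℕ} (hmn : m ≤ n) (x : X) :
    n - m ≤ maxFit T δ n (T^[m] x) x := by
  apply le_maxFit
  refine ⟨fun s => s, fun s => s + m, ?_, ?_, ?_, ?_, ?_⟩
  · intro a b hab; exact_mod_cast hab
  · intro a b hab; simpa using (by exact_mod_cast hab : (a:ℕ) < b)
  · intro s; show (s:ℕ) < n; have := s.isLt; omega
  · intro s; show (s:ℕ) + m < n; have := s.isLt; omega
  · intro s
    show dist (T^[(s:ℕ)] (T^[m] x)) (T^[(s:ℕ)+m] x) < δ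
    have : T^[(s:ℕ)] (T^[m] x) = T^[(s:ℕ) + m] x := by
      rw [← Function.iterate_add_apply]
    rw [this]; simpa using hδ

lemma maxFit_comp (T : X → X) (δ1 δ2 : ℝ) (n : ℕ) (x y z : X) :
    maxFit T δ1 n x y + maxFit T δ2 n y z ≤ maxFit T (δ1 + δ2) n x z + n := by
  set k1 := maxFit T δ1 n x y with hk1
  set k2 := maxFit T δ2 n y z with hk2
  obtain ⟨i1, j1, hi1, hj1, hi1n, hj1n, hd1⟩ := maxFit_mem T δ1 n x y
  obtain ⟨i2, j2, hi2, hj2, hi2n, hj2n, hd2⟩ := maxFit_mem T δ2 n y z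
  classical
  set J1 : Finset ℕ := Finset.image j1 Finset.univ with hJ1
  set I2 : Finset ℕ := Finset.image i2 Finset.univ with hI2
  have hJ1card : J1.card = k1 := by
    rw [hJ1, Finset.card_image_of_injective _ hj1.injective, Finset.card_univ, Fintype.card_fin]
  have hI2card : I2.card = k2 := by
    rw [hI2, Finset.card_image_of_injective _ hi2.injective, Finset.card_univ, Fintype.card_fin]
  have hU : (J1 ∪ I2) ⊆ Finset.range n := by
    intro a ha
    rcases Finset.mem_union.mp ha with h | h
    · obtain ⟨s, _, rfl⟩ := Finset.mem_image.mp h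
      exact Finset.mem_range.mpr (hj1n s)
    · obtain ⟨s, _, rfl⟩ := Finset.mem_image.mp h
      exact Finset.mem_range.mpr (hi2n s)
  have hUcard : (J1 ∪ I2).card ≤ n := by
    simpa using Finset.card_le_card hU
  set S : Finset ℕ := J1 ∩ I2 with hS
  have hScard : S.card + (J1 ∪ I2).card = k1 + k2 := by
    rw [hS, Finset.card_inter_add_card_union, hJ1card, hI2card]
  -- now build a match of size S.card for (δ1+δ2, x, z)
  have hmem : S.card ≤ maxFit T (δ1 + δ2) n x z := by
    apply le_maxFit
    set e := S.orderIsoOfFin rfl with he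
    have heS : ∀ t, (e t : ℕ) ∈ S := fun t => (e t).2
    have hs1 : ∀ t, ∃ s, j1 s = (e t : ℕ) := by
      intro t
      have := Finset.mem_inter.mp (heS t) |>.1
      obtain ⟨s, _, hs⟩ := Finset.mem_image.mp this
      exact ⟨s, hs⟩
    have hs2 : ∀ t, ∃ s, i2 s = (e t : ℕ) := by
      intro t
      have := Finset.mem_inter.mp (heS t) |>.2
      obtain ⟨s, _, hs⟩ := Finset.mem_image.mp this
      exact ⟨s, hs⟩
    choose s1 hs1' using hs1
    choose s2 hs2' using hs2
    have hemono : StrictMono (fun t => (e t : ℕ)) := by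
      intro a b hab
      exact_mod_cast e.strictMono hab
    have hs1mono : StrictMono s1 := by
      intro a b hab
      have : j1 (s1 a) < j1 (s1 b) := by rw [hs1', hs1']; exact hemono hab
      exact hj1.lt_iff_lt.mp this
    have hs2mono : StrictMono s2 := by
      intro a b hab
      have : i2 (s2 a) < i2 (s2 b) := by rw [hs2', hs2']; exact hemono hab
      exact hi2.lt_iff_lt.mp this
    refine ⟨fun t => i1 (s1 t), fun t => j2 (s2 t), hi1.comp hs1mono, hj2.comp hs2mono,
      fun t => hi1n _, fun t => hj2n _, ?_⟩
    intro t
    calc dist (T^[i1 (s1 t)] x) (T^[j2 (s2 t)] z)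
        ≤ dist (T^[i1 (s1 t)] x) (T^[j1 (s1 t)] y) + dist (T^[j1 (s1 t)] y) (T^[j2 (s2 t)] z) :=
          dist_triangle _ _ _
      _ < δ1 + δ2 := by
          apply add_lt_add (hd1 _)
          have : j1 (s1 t) = i2 (s2 t) := by rw [hs1', hs2']
          rw [this]; exact hd2 _
  omega


lemma fbarN_nonneg (T : X → X) (δ : ℝ) (n : ℕ) (x z : X) : 0 ≤ fbarN T δ n x z := by
  unfold fbarN
  rcases Nat.eq_zero_or_pos n with h | h
  · simp [h]
  · have hn : (0:ℝ) < n := by exact_mod_cast h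
    have : (maxFit T δ n x z : ℝ) / n ≤ 1 := by
      rw [div_le_one hn]; exact_mod_cast maxFit_le T δ n x z
    linarith

lemma fbarN_le_one (T : X → X) (δ : ℝ) (n : ℕ) (x z : X) : fbarN T δ n x z ≤ 1 := by
  unfold fbarN
  have : (0:ℝ) ≤ (maxFit T δ n x z : ℝ) / n := by positivity
  linarith

lemma fbarN_bddAbove (T : X → X) (δ : ℝ) (x z : X) :
    IsBoundedUnder (· ≤ ·) atTop (fun n => fbarN T δ n x z) :=
  isBoundedUnder_of ⟨1, fun n : ℕ => fbarN_le_one T δ n x z⟩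

lemma fbarN_cobdd (T : X → X) (δ : ℝ) (x z : X) :
    IsCoboundedUnder (· ≤ ·) atTop (fun n => fbarN T δ n x z) :=
  IsBoundedUnder.isCoboundedUnder_le
    (isBoundedUnder_of ⟨0, fun n : ℕ => fbarN_nonneg T δ n x z⟩)

lemma fbar_le_one (T : X → X) (δ : ℝ) (x z : X) : fbar T δ x z ≤ 1 :=
  limsup_le_of_le (fbarN_cobdd T δ x z)
    (Filter.Eventually.of_forall fun n => fbarN_le_one T δ n x z)

lemma fbar_triangle (T : X → X) (δ1 δ2 : ℝ) (x y z : X) :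
    fbar T (δ1 + δ2) x z ≤ fbar T δ1 x y + fbar T δ2 y z := by
  have key : ∀ n : ℕ, fbarN T (δ1 + δ2) n x z ≤ fbarN T δ1 n x y + fbarN T δ2 n y z := by
    intro n
    rcases Nat.eq_zero_or_pos n with h | h
    · subst h; unfold fbarN; simp
    · have hn : (0:ℝ) < n := by exact_mod_cast h
      have hc := maxFit_comp T δ1 δ2 n x y z
      have hc' : (maxFit T δ1 n x y : ℝ) + maxFit T δ2 n y z ≤ maxFit T (δ1+δ2) n x z + n := by
        exact_mod_cast hc
      unfold fbarN
      have hg : ((maxFit T δ1 n x y : ℝ) + maxFit T δ2 n y z)/n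
          ≤ ((maxFit T (δ1+δ2) n x z : ℝ) + n)/n := by gcongr
      rw [add_div, add_div, div_self (ne_of_gt hn)] at hg
      linarith
  -- limsup argument
  refine le_of_forall_pos_le_add ?_
  intro ε hε
  have h1 : ∀ᶠ n in atTop, fbarN T δ1 n x y < fbar T δ1 x y + ε/2 :=
    eventually_lt_of_limsup_lt (by linarith [fbar_le_one T δ1 x y, hε] : fbar T δ1 x y < fbar T δ1 x y + ε/2)
      (fbarN_bddAbove T δ1 x y)
  have h2 : ∀ᶠ n in atTop, fbarN T δ2 n y z < fbar T δ2 y z + ε/2 :=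
    eventually_lt_of_limsup_lt (by linarith : fbar T δ2 y z < fbar T δ2 y z + ε/2)
      (fbarN_bddAbove T δ2 y z)
  refine limsup_le_of_le (fbarN_cobdd T (δ1+δ2) x z) ?_
  filter_upwards [h1, h2] with n hn1 hn2
  calc fbarN T (δ1 + δ2) n x z ≤ fbarN T δ1 n x y + fbarN T δ2 n y z := key n
    _ ≤ fbar T δ1 x y + fbar T δ2 y z + ε := by linarith

lemma fbar_shift_nonpos (T : X → X) {δ : ℝ} (hδ : 0 < δ) (m : ℕ) (x : X) :
    fbar T δ x (T^[m] x) ≤ 0 := by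
  refine le_of_forall_pos_le_add ?_
  intro ε hε
  have hev : ∀ᶠ n : ℕ in atTop, fbarN T δ n x (T^[m] x) ≤ (m : ℝ) / n := by
    filter_upwards [eventually_ge_atTop (m+1)] with n hn1
    have hn : m ≤ n := by omega
    have hnpos : (0:ℝ) < n := by exact_mod_cast (by omega : 0 < n)
    unfold fbarN
    have hF := shift_le_maxFit T hδ hn x
    have hcast : ((n - m : ℕ) : ℝ) ≤ (maxFit T δ n x (T^[m] x) : ℝ) := by exact_mod_cast hF
    have hsub : ((n - m : ℕ) : ℝ) = (n:ℝ) - m := by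
      push_cast [Nat.cast_sub hn]; ring
    rw [hsub] at hcast
    have hdiv : ((n:ℝ) - m)/n ≤ (maxFit T δ n x (T^[m] x) : ℝ)/n := by gcongr
    rw [sub_div, div_self (ne_of_gt hnpos)] at hdiv
    linarith
  have hlim : Tendsto (fun n : ℕ => (m:ℝ)/n) atTop (nhds 0) :=
    tendsto_const_div_atTop_nhds_zero_nat (m:ℝ)
  have hev2 : ∀ᶠ n : ℕ in atTop, (m:ℝ)/n < ε := hlim.eventually (gt_mem_nhds hε)
  have : limsup (fun n => fbarN T δ n x (T^[m] x)) atTop ≤ ε := by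
    refine limsup_le_of_le (fbarN_cobdd T δ x (T^[m] x)) ?_
    filter_upwards [hev, hev2] with n h1 h2
    linarith
  simpa [fbar] using this

lemma fbar_shift_nonpos' (T : X → X) {δ : ℝ} (hδ : 0 < δ) (m : ℕ) (x : X) :
    fbar T δ (T^[m] x) x ≤ 0 := by
  refine le_of_forall_pos_le_add ?_
  intro ε hε
  have hev : ∀ᶠ n : ℕ in atTop, fbarN T δ n (T^[m] x) x ≤ (m : ℝ) / n := by
    filter_upwards [eventually_ge_atTop (m+1)] with n hn1
    have hn : m ≤ n := by omega
    have hnpos : (0:ℝ) < n := by exact_mod_cast (by omega : 0 < n)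
    unfold fbarN
    have hF := shift_le_maxFit' T hδ hn x
    have hcast : ((n - m : ℕ) : ℝ) ≤ (maxFit T δ n (T^[m] x) x : ℝ) := by exact_mod_cast hF
    have hsub : ((n - m : ℕ) : ℝ) = (n:ℝ) - m := by
      push_cast [Nat.cast_sub hn]; ring
    rw [hsub] at hcast
    have hdiv : ((n:ℝ) - m)/n ≤ (maxFit T δ n (T^[m] x) x : ℝ)/n := by gcongr
    rw [sub_div, div_self (ne_of_gt hnpos)] at hdiv
    linarith
  have hlim : Tendsto (fun n : ℕ => (m:ℝ)/n) atTop (nhds 0) :=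
    tendsto_const_div_atTop_nhds_zero_nat (m:ℝ)
  have hev2 : ∀ᶠ n : ℕ in atTop, (m:ℝ)/n < ε := hlim.eventually (gt_mem_nhds hε)
  have : limsup (fun n => fbarN T δ n (T^[m] x) x) atTop ≤ ε := by
    refine limsup_le_of_le (fbarN_cobdd T δ (T^[m] x) x) ?_
    filter_upwards [hev, hev2] with n h1 h2
    linarith
  simpa [fbar] using this

-- rhoFK basics
lemma rhoFK_set_nonempty (T : X → X) (x z : X) :
    {δ : ℝ | 0 < δ ∧ fbar T δ x z < δ}.Nonempty :=
  ⟨2, by norm_num, lt_of_le_of_lt (fbar_le_one T 2 x z) (by norm_num)⟩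

lemma rhoFK_nonneg (T : X → X) (x z : X) : 0 ≤ rhoFK T x z :=
  Real.sInf_nonneg fun δ hδ => hδ.1.le

lemma rhoFK_le_of_mem {T : X → X} {x z : X} {δ : ℝ} (h1 : 0 < δ) (h2 : fbar T δ x z < δ) :
    rhoFK T x z ≤ δ :=
  csInf_le ⟨0, fun a ha => ha.1.le⟩ ⟨h1, h2⟩

lemma rhoFK_shift (T : X → X) (m : ℕ) (x : X) : rhoFK T x (T^[m] x) = 0 := by
  refine le_antisymm ?_ (rhoFK_nonneg T x _)
  refine le_of_forall_pos_le_add ?_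
  intro ε hε
  simpa using rhoFK_le_of_mem hε (lt_of_le_of_lt (fbar_shift_nonpos T hε m x) hε)

lemma rhoFK_shift' (T : X → X) (m : ℕ) (x : X) : rhoFK T (T^[m] x) x = 0 := by
  refine le_antisymm ?_ (rhoFK_nonneg T _ _)
  refine le_of_forall_pos_le_add ?_
  intro ε hε
  simpa using rhoFK_le_of_mem hε (lt_of_le_of_lt (fbar_shift_nonpos' T hε m x) hε)

lemma rhoFK_triangle (T : X → X) (x y z : X) :
    rhoFK T x z ≤ rhoFK T x y + rhoFK T y z := by
  refine le_of_forall_pos_le_add ?_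
  intro ε hε
  obtain ⟨δ1, hδ1mem, hδ1lt⟩ := Real.lt_sInf_add_pos (rhoFK_set_nonempty T x y) (half_pos hε)
  obtain ⟨δ2, hδ2mem, hδ2lt⟩ := Real.lt_sInf_add_pos (rhoFK_set_nonempty T y z) (half_pos hε)
  have hmem : 0 < δ1 + δ2 ∧ fbar T (δ1 + δ2) x z < δ1 + δ2 :=
    ⟨add_pos hδ1mem.1 hδ2mem.1,
      lt_of_le_of_lt (fbar_triangle T δ1 δ2 x y z) (add_lt_add hδ1mem.2 hδ2mem.2)⟩
  have := rhoFK_le_of_mem hmem.1 hmem.2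
  have h1 : δ1 < rhoFK T x y + ε/2 := hδ1lt
  have h2 : δ2 < rhoFK T y z + ε/2 := hδ2lt
  linarith


end FKPaper

section ErgodicAux
variable {X : Type*} [MetricSpace X] [MeasurableSpace X] [BorelSpace X]

lemma ergodic_hits (T : X → X) (hT : Continuous T) (μ : Measure X) [IsProbabilityMeasure μ]
    (hμ : Ergodic T μ) {A : Set X} (hA : MeasurableSet A) (h0 : μ A ≠ 0) :
    μ {x | ∃ n : ℕ, T^[n] x ∈ A} = 1 := by
  set U : Set X := ⋃ n : ℕ, T^[n] ⁻¹' A with hU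
  have hUeq : {x | ∃ n : ℕ, T^[n] x ∈ A} = U := by
    ext x; simp [hU]
  rw [hUeq]
  have hUmeas : MeasurableSet U :=
    MeasurableSet.iUnion fun n => (hT.measurable.iterate n) hA
  have hsub : T ⁻¹' U ⊆ U := by
    intro x hx
    simp only [hU, mem_preimage, mem_iUnion] at hx ⊢
    obtain ⟨n, hn⟩ := hx
    exact ⟨n + 1, by rwa [Function.iterate_succ_apply]⟩
  have hpre : μ (T ⁻¹' U) = μ U :=
    hμ.toMeasurePreserving.measure_preimage hUmeas.nullMeasurableSet
  have haeeq : T ⁻¹' U =ᵐ[μ] U :=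
    ae_eq_of_subset_of_measure_ge hsub hpre.ge (hUmeas.preimage hT.measurable).nullMeasurableSet
      (measure_ne_top μ U)
  rcases hμ.quasiErgodic.ae_empty_or_univ₀ hUmeas.nullMeasurableSet haeeq with h | h
  · exfalso
    apply h0
    have hAU : A ⊆ U := by
      intro x hx
      simp only [hU, mem_iUnion]
      exact ⟨0, by simpa using hx⟩
    have : μ U = 0 := by
      have := measure_congr h
      simpa using this
    exact le_antisymm (this ▸ measure_mono hAU) zero_le
  · have := measure_congr h
    simpa using this

end ErgodicAux

/-- `μ`-FK-continuity is equivalent to the existence of a full-measure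
Borel set on which `ρ_FK` vanishes. -/
theorem muFKContinuous_iff_full_measure_rhoFK_zero {X : Type*} [MetricSpace X] [CompactSpace X] [Nonempty X]
    (T : X → X) (hT : Continuous T) [MeasurableSpace X] [BorelSpace X]
    (μ : Measure X) [IsProbabilityMeasure μ] (hμ : Ergodic T μ) :
    MuFKContinuous T μ ↔
      ∃ H : Set X, MeasurableSet H ∧ μ H = 1 ∧
        ∀ x ∈ H, ∀ y ∈ H, rhoFK T x y = 0 := by
  constructor
  · -- forward direction
    intro hcont
    obtain ⟨M, hMcomp, hMge, hMprop⟩ := hcont (1/2) (by norm_num)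
    have hMpos : μ M ≠ 0 := by
      intro h
      rw [h] at hMge
      simp only [nonpos_iff_eq_zero, ENNReal.ofReal_eq_zero] at hMge
      norm_num at hMge
    have hchoice : ∀ j : ℕ, ∃ δ > 0, ∀ x ∈ M, ∀ y ∈ M,
        dist x y ≤ δ → rhoFK T x y ≤ 1/((j:ℝ)+1) :=
      fun j => hMprop (1/((j:ℝ)+1)) (by positivity)
    choose δ hδpos hδprop using hchoice
    have hball : ∀ j : ℕ, ∃ c : X, μ (M ∩ Metric.ball c (δ j / 2)) ≠ 0 := by
      intro j
      by_contra h
      push_neg at h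
      obtain ⟨t, ht⟩ := hMcomp.elim_finite_subcover (fun c : X => Metric.ball c (δ j / 2))
        (fun c => Metric.isOpen_ball)
        (fun x hx => mem_iUnion.mpr ⟨x, Metric.mem_ball_self (half_pos (hδpos j))⟩)
      apply hMpos
      have hMsub : M ⊆ ⋃ c ∈ t, M ∩ Metric.ball c (δ j / 2) := by
        intro x hx
        obtain ⟨c, hc, hxc⟩ := by simpa using ht hx
        exact mem_biUnion hc ⟨hx, hxc⟩
      refine le_antisymm ?_ zero_le
      calc μ M ≤ μ (⋃ c ∈ t, M ∩ Metric.ball c (δ j / 2)) := measure_mono hMsub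
        _ ≤ ∑ c ∈ t, μ (M ∩ Metric.ball c (δ j / 2)) := measure_biUnion_finset_le t _
        _ = 0 := by simp [h]
    choose c hc using hball
    set A : ℕ → Set X := fun j => M ∩ Metric.ball (c j) (δ j / 2) with hA
    have hAmeas : ∀ j, MeasurableSet (A j) :=
      fun j => (hMcomp.isClosed.measurableSet).inter measurableSet_ball
    set U : ℕ → Set X := fun j => {x | ∃ n : ℕ, T^[n] x ∈ A j} with hUdef
    have hUmeas : ∀ j, MeasurableSet (U j) := by
      intro j
      have : U j = ⋃ n : ℕ, T^[n] ⁻¹' (A j) := by ext x; simp [hUdef]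
      rw [this]
      exact MeasurableSet.iUnion fun n => (hT.measurable.iterate n) (hAmeas j)
    have hU1 : ∀ j, μ (U j) = 1 := fun j => ergodic_hits T hT μ hμ (hAmeas j) (hc j)
    refine ⟨⋂ j, U j, MeasurableSet.iInter hUmeas, ?_, ?_⟩
    · rw [← prob_compl_eq_zero_iff (MeasurableSet.iInter hUmeas)]
      rw [Set.compl_iInter]
      exact measure_iUnion_null fun j => (prob_compl_eq_zero_iff (hUmeas j)).mpr (hU1 j)
    · intro x hx y hy
      refine le_antisymm ?_ (rhoFK_nonneg T x y)
      have h0 : rhoFK T x y ≤ 0 + 0 := by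
        rw [add_zero]
        refine le_of_forall_pos_le_add ?_
        intro ε hε
        obtain ⟨j, hj⟩ := exists_nat_one_div_lt hε
        obtain ⟨n, hn⟩ := mem_iInter.mp hx j
        obtain ⟨m, hm⟩ := mem_iInter.mp hy j
        have hnM : T^[n] x ∈ M := hn.1
        have hmM : T^[m] y ∈ M := hm.1
        have hdist : dist (T^[n] x) (T^[m] y) ≤ δ j := by
          have h1 : dist (T^[n] x) (c j) < δ j / 2 := by
            simpa [Metric.mem_ball] using hn.2
          have h2 : dist (T^[m] y) (c j) < δ j / 2 := by
            simpa [Metric.mem_ball] using hm.2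
          calc dist (T^[n] x) (T^[m] y) ≤ dist (T^[n] x) (c j) + dist (c j) (T^[m] y) :=
                dist_triangle _ _ _
            _ ≤ δ j := by rw [dist_comm (c j)]; linarith
        have hmid : rhoFK T (T^[n] x) (T^[m] y) ≤ 1/((j:ℝ)+1) :=
          hδprop j _ hnM _ hmM hdist
        calc rhoFK T x y ≤ rhoFK T x (T^[n] x) + rhoFK T (T^[n] x) y :=
              rhoFK_triangle T x (T^[n] x) y
          _ ≤ rhoFK T x (T^[n] x) + (rhoFK T (T^[n] x) (T^[m] y) + rhoFK T (T^[m] y) y) := by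
              have := rhoFK_triangle T (T^[n] x) (T^[m] y) y
              linarith
          _ = rhoFK T (T^[n] x) (T^[m] y) := by
              rw [rhoFK_shift T n x, rhoFK_shift' T m y]; ring
          _ ≤ 1/((j:ℝ)+1) := hmid
          _ ≤ 0 + ε := by rw [zero_add]; exact hj.le
      simpa using h0
  · -- backward direction
    rintro ⟨H, hHmeas, hH1, hH0⟩
    intro τ hτ
    by_cases hτ1 : 1 ≤ τ
    · refine ⟨∅, isCompact_empty, ?_, fun ε hε => ⟨1, one_pos, fun x hx => absurd hx (notMem_empty x)⟩⟩
      rw [ENNReal.ofReal_eq_zero.mpr (by linarith)]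
      exact zero_le
    · push_neg at hτ1
      have hpos : (1 : ENNReal) - ENNReal.ofReal (1 - τ) ≠ 0 := by
        have h1 : ENNReal.ofReal (1 - τ) < 1 := by
          rw [← ENNReal.ofReal_one]
          exact ENNReal.ofReal_lt_ofReal_iff_of_nonneg (by linarith) |>.mpr (by linarith)
        simp only [ne_eq, tsub_eq_zero_iff_le, not_le]
        exact h1
      obtain ⟨K, hKH, hKcomp, hK⟩ := hHmeas.exists_isCompact_lt_add (measure_ne_top μ H) hpos
      refine ⟨K, hKcomp, ?_, fun ε hε => ⟨1, one_pos, fun x hx y hy _ => ?_⟩⟩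
      · rw [hH1] at hK
        have hle1 : ENNReal.ofReal (1 - τ) ≤ 1 := by
          rw [← ENNReal.ofReal_one]
          exact ENNReal.ofReal_le_ofReal (by linarith)
        have h2 : (1:ENNReal) - (1 - ENNReal.ofReal (1 - τ)) ≤ μ K :=
          tsub_le_iff_right.mpr hK.le
        rwa [ENNReal.sub_sub_cancel ENNReal.one_ne_top hle1] at h2
      · rw [hH0 x (hKH hx) y (hKH hy)]
        exact hε.le
end
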